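/- arXiv:1705.05675 — 2 statements merged into one kernel-verified Lean document; each statement's English description precedes it below -/
import Mathlib

section
/- For all natural numbers a, c, d, n, p, we have ∑_{k=0}^{a} C(a,k)·C(c+d−a, p+k)·C(k,c)·C(n−k,d) = C(n+a+p−c−d, a+p)·C(n−a, d−a−p)·C(a,c). -/
/-- Binomial coefficient for integers: `C x y` is the usual binomial coefficient
when `0 ≤ y ≤ x`, and `0` otherwise. -/
def C (x y : ℤ) : ℤ := if 0 ≤ y ∧ y ≤ x then (x.toNat.choose y.toNat : ℤ) else 0

lemma C_ne {x y : ℤ} (h : C x y ≠ 0) : 0 ≤ y ∧ y ≤ x := by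
  by_contra hc; exact h (if_neg hc)

lemma C_of_neg {x y : ℤ} (h : y < 0) : C x y = 0 := by
  apply if_neg; omega

lemma C_of_lt {x y : ℤ} (h : x < y) : C x y = 0 := by
  apply if_neg; omega

lemma C_nn (x y : ℤ) (hy : 0 ≤ y) (hx : 0 ≤ x) : C x y = x.toNat.choose y.toNat := by
  by_cases h : y ≤ x
  · exact if_pos ⟨hy, h⟩
  · rw [C_of_lt (by omega), Nat.choose_eq_zero_of_lt (by omega)]; rfl

lemma C_nat (x y : ℕ) : C x y = x.choose y := by
  rw [C_nn _ _ (by positivity) (by positivity)]; simp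

lemma C_symm (x : ℤ) (hx : 0 ≤ x) (y : ℤ) : C x y = C x (x - y) := by
  by_cases hy : 0 ≤ y
  · by_cases hyx : y ≤ x
    · rw [C_nn _ _ hy hx, C_nn _ _ (by omega) hx]
      have : (x - y).toNat = x.toNat - y.toNat := by omega
      rw [this, Nat.choose_symm (by omega)]
    · rw [C_of_lt (by omega), C_of_neg (by omega)]
  · rw [C_of_neg (by omega), C_of_lt (by omega)]

lemma C_tri (nn : ℕ) (k m : ℤ) : C nn k * C k m = C nn m * C ((nn:ℤ) - m) (k - m) := by
  by_cases hm : 0 ≤ m ∧ m ≤ k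
  · by_cases hk : k ≤ (nn:ℤ)
    · have h0k : 0 ≤ k := by omega
      rw [C_nn _ _ h0k (by positivity), C_nn _ _ hm.1 h0k, C_nn _ _ hm.1 (by positivity),
        C_nn _ _ (by omega) (by omega)]
      have e1 : ((nn:ℤ)).toNat = nn := by omega
      have e2 : ((nn:ℤ) - m).toNat = nn - m.toNat := by omega
      have e3 : (k - m).toNat = k.toNat - m.toNat := by omega
      rw [e1, e2, e3, ← Nat.cast_mul, ← Nat.cast_mul,
        Nat.choose_mul (by omega)]
    · rw [C_of_lt (by omega), C_of_lt (show (nn:ℤ) - m < k - m by omega), zero_mul, mul_zero]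
  · rcases not_and_or.mp hm with h | h
    · have h1 : C k m = 0 := C_of_neg (by omega)
      have h2 : C (nn:ℤ) m = 0 := C_of_neg (by omega)
      rw [h1, h2]; ring
    · have h1 : C k m = 0 := C_of_lt (by omega)
      have h2 : C ((nn:ℤ) - m) (k - m) = 0 := C_of_neg (by omega)
      rw [h1, h2]; ring

lemma C_swap (A : ℕ) (j i : ℤ) : C A j * C ((A:ℤ) - j) i = C A i * C ((A:ℤ) - i) j := by
  have h1 : C A (j + i) * C (j + i) j = C A j * C ((A:ℤ) - j) i := by
    have h := C_tri A (j + i) j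
    have e : j + i - j = i := by ring
    rw [e] at h; exact h
  have h2 : C A (i + j) * C (i + j) i = C A i * C ((A:ℤ) - i) j := by
    have h := C_tri A (i + j) i
    have e : i + j - i = j := by ring
    rw [e] at h; exact h
  rw [← h1, ← h2]
  by_cases h : 0 ≤ i + j
  · have e : i + j - j = i := by ring
    rw [add_comm j i, C_symm _ h j, e]
  · have z1 : C (A:ℤ) (j + i) = 0 := C_of_neg (by omega)
    have z2 : C (A:ℤ) (i + j) = 0 := C_of_neg (by omega)
    rw [z1, z2, zero_mul, zero_mul]

open Finset in
lemma vdm_core (x y mn : ℕ) :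
    ∑ j ∈ range (mn + 1), C x j * C y ((mn : ℤ) - j) = C (x + y) mn := by
  have h : ∀ j ∈ range (mn + 1), C (x:ℤ) j * C y ((mn:ℤ) - j)
      = ((x.choose j * y.choose (mn - j) : ℕ) : ℤ) := by
    intro j hj
    simp only [mem_range] at hj
    have hj' : j ≤ mn := by omega
    rw [C_nat x j, C_nn _ _ (by omega) (by positivity)]
    have e : ((mn:ℤ) - j).toNat = mn - j := by omega
    rw [e, Int.toNat_natCast]; push_cast; ring
  rw [Finset.sum_congr rfl h, ← Nat.cast_add, C_nat, ← Nat.cast_sum]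
  norm_cast
  rw [Nat.add_choose_eq, Finset.Nat.sum_antidiagonal_eq_sum_range_succ_mk]

open Finset in
lemma vdm (x y L : ℕ) (m : ℤ) (h : x < L) :
    ∑ j ∈ range L, C x j * C y (m - j) = C (x + y) m := by
  by_cases hm : 0 ≤ m
  · set mn := m.toNat with hmn
    have hm' : (mn : ℤ) = m := by omega
    have big : ∀ N₁ N₂ : ℕ, N₁ ≤ N₂ → x < N₁ → (mn : ℤ) < N₁ →
        ∑ j ∈ range N₂, C x j * C y (m - j) = ∑ j ∈ range N₁, C x j * C y (m - j) := by
      intro N₁ N₂ hN hx1 hm1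
      symm
      apply Finset.sum_subset (Finset.range_subset_range.mpr hN)
      intro j hj hj'
      simp only [mem_range, not_lt] at hj hj'
      rw [C_of_lt (show (x:ℤ) < j by omega), zero_mul]
    have e1 := big (max L (mn+1)) (max L (mn+1)) le_rfl (by omega) (by omega)
    have e2 : ∑ j ∈ range (max L (mn+1)), C x j * C y (m - j)
        = ∑ j ∈ range L, C x j * C y (m - j) := by
      symm
      apply Finset.sum_subset (Finset.range_subset_range.mpr (le_max_left _ _))
      intro j hj hj'
      simp only [mem_range, not_lt] at hj hj'
      rw [C_of_lt (show (x:ℤ) < j by omega), zero_mul]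
    have e3 : ∑ j ∈ range (max L (mn+1)), C x j * C y (m - j)
        = ∑ j ∈ range (mn+1), C x j * C y (m - j) := by
      symm
      apply Finset.sum_subset (Finset.range_subset_range.mpr (le_max_right _ _))
      intro j hj hj'
      simp only [mem_range, not_lt] at hj hj'
      rw [C_of_neg (show m - j < 0 by omega), mul_zero]
    rw [← e2, e3, ← hm']
    exact vdm_core x y mn
  · rw [C_of_neg (by omega)]
    apply Finset.sum_eq_zero
    intro j _
    rw [C_of_neg (show m - j < 0 by omega), mul_zero]

open Finset in
lemma vdm' (x y M c' : ℕ) (m : ℤ) (h : x + c' < M) :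
    ∑ k ∈ range M, C x ((k : ℤ) - c') * C y (m - ((k : ℤ) - c')) = C (x + y) m := by
  have e1 : ∑ k ∈ range M, C x ((k : ℤ) - c') * C y (m - ((k : ℤ) - c'))
      = ∑ k ∈ Ico c' M, C x ((k : ℤ) - c') * C y (m - ((k : ℤ) - c')) := by
    symm
    apply Finset.sum_subset
    · intro k hk; simp only [mem_Ico, mem_range] at *; omega
    · intro k hk hk'
      simp only [mem_range, mem_Ico, not_and, not_le] at hk hk'
      rw [C_of_neg (show (k:ℤ) - c' < 0 by omega), zero_mul]
  rw [e1, Finset.sum_Ico_eq_sum_range]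
  have e2 : ∀ j ∈ range (M - c'), C (x:ℤ) ((↑(c' + j) : ℤ) - c') * C y (m - ((↑(c' + j) : ℤ) - c'))
      = C (x:ℤ) j * C y (m - j) := by
    intro j _
    have e : ((c' + j : ℕ) : ℤ) - c' = j := by push_cast; ring
    rw [e]
  rw [Finset.sum_congr rfl e2]
  exact vdm x y (M - c') m (by omega)


open Finset in
theorem stmt_3 (a c d n p : ℕ) :
    ∑ k ∈ Finset.range (a + 1), C a k * C ((c : ℤ) + d - a) ((p : ℤ) + k) * C k c * C ((n : ℤ) - k) d = C ((n : ℤ) + a + p - c - d) ((a : ℤ) + p) * C ((n : ℤ) - a) ((d : ℤ) - a - p) * C a c := by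
  by_cases hca : c ≤ a
  · by_cases hd : a ≤ c + d
    · by_cases hn : a ≤ n
      · -- main case
        have step1 : ∀ k ∈ Finset.range (a+1),
            C a k * C ((c:ℤ)+d-a) ((p:ℤ)+k) * C k c * C ((n:ℤ)-k) d
            = C a c * (C ((a:ℤ)-c) ((k:ℤ)-c) * (C ((c:ℤ)+d-a) ((p:ℤ)+k) * C ((n:ℤ)-k) d)) := by
          intro k _
          have h := C_tri a k c
          calc C (a:ℤ) k * C ((c:ℤ)+d-a) ((p:ℤ)+k) * C k c * C ((n:ℤ)-k) d
              = (C (a:ℤ) k * C k c) * (C ((c:ℤ)+d-a) ((p:ℤ)+k) * C ((n:ℤ)-k) d) := by ring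
            _ = (C (a:ℤ) c * C ((a:ℤ)-c) ((k:ℤ)-c)) * (C ((c:ℤ)+d-a) ((p:ℤ)+k) * C ((n:ℤ)-k) d) := by rw [h]
            _ = C a c * (C ((a:ℤ)-c) ((k:ℤ)-c) * (C ((c:ℤ)+d-a) ((p:ℤ)+k) * C ((n:ℤ)-k) d)) := by ring
        rw [Finset.sum_congr rfl step1, ← Finset.mul_sum]
        have step2 : ∀ k ∈ Finset.range (a+1),
            C ((a:ℤ)-c) ((k:ℤ)-c) * (C ((c:ℤ)+d-a) ((p:ℤ)+k) * C ((n:ℤ)-k) d)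
            = ∑ i ∈ Finset.range (a+1),
                C ((a:ℤ)-c) ((k:ℤ)-c) * (C ((c:ℤ)+d-a) ((p:ℤ)+k) * (C (↑(a-k)) i * C (↑(n-a)) ((d:ℤ)-i))) := by
          intro k hk
          simp only [Finset.mem_range] at hk
          have hv := vdm (a-k) (n-a) (a+1) d (by omega)
          have e : C ((n:ℤ)-k) d = ∑ i ∈ Finset.range (a+1), C (↑(a-k)) (i:ℤ) * C (↑(n-a)) ((d:ℤ)-i) := by
            rw [show ((n:ℤ) - k) = ((((a-k)+(n-a) : ℕ)) : ℤ) by omega]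
            rw [show (((d:ℕ):ℤ)) = ((d:ℕ):ℤ) from rfl]
            exact hv.symm
          rw [e, Finset.mul_sum, Finset.mul_sum]
        rw [Finset.sum_congr rfl step2, Finset.sum_comm]
        have step3 : ∀ i ∈ Finset.range (a+1),
            (∑ k ∈ Finset.range (a+1),
              C ((a:ℤ)-c) ((k:ℤ)-c) * (C ((c:ℤ)+d-a) ((p:ℤ)+k) * (C (↑(a-k)) (i:ℤ) * C (↑(n-a)) ((d:ℤ)-i))))
            = C ((a:ℤ)-c) (i:ℤ) * (C (↑(n-a)) ((d:ℤ)-i) * C ((d:ℤ)-i) ((d:ℤ)-a-p)) := by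
          intro i _
          by_cases hi : i ≤ a - c
          · have inner : ∀ k ∈ Finset.range (a+1),
                C ((a:ℤ)-c) ((k:ℤ)-c) * (C ((c:ℤ)+d-a) ((p:ℤ)+k) * (C (↑(a-k)) (i:ℤ) * C (↑(n-a)) ((d:ℤ)-i)))
                = (C ((a:ℤ)-c) (i:ℤ) * C (↑(n-a)) ((d:ℤ)-i)) *
                  (C (↑(a-c-i)) ((k:ℤ)-c) * C (↑(c+d-a)) (((d:ℤ)-a-p) - ((k:ℤ)-c))) := by
              intro k hk
              simp only [Finset.mem_range] at hk
              have e1 : C ((a:ℤ)-c) ((k:ℤ)-c) * C (↑(a-k)) (i:ℤ)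
                  = C ((a:ℤ)-c) (i:ℤ) * C (↑(a-c-i)) ((k:ℤ)-c) := by
                have h := C_swap (a-c) ((k:ℤ)-c) (i:ℤ)
                rw [show (((a-c:ℕ)):ℤ) = (a:ℤ)-c by omega] at h
                rw [show ((a:ℤ)-c) - ((k:ℤ)-c) = (↑(a-k):ℤ) by omega] at h
                rw [show ((a:ℤ)-c) - (i:ℤ) = (↑(a-c-i):ℤ) by omega] at h
                exact h
              have e2 : C ((c:ℤ)+d-a) ((p:ℤ)+k) = C (↑(c+d-a)) (((d:ℤ)-a-p) - ((k:ℤ)-c)) := by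
                have h := C_symm ((c:ℤ)+d-a) (by omega) ((p:ℤ)+k)
                rw [show ((c:ℤ)+d-a) - ((p:ℤ)+k) = ((d:ℤ)-a-p) - ((k:ℤ)-c) by ring] at h
                rw [show ((c:ℤ)+d-a) = (↑(c+d-a):ℤ) by omega] at h
                rw [show ((c:ℤ)+d-a) = (↑(c+d-a):ℤ) by omega]
                exact h
              calc C ((a:ℤ)-c) ((k:ℤ)-c) * (C ((c:ℤ)+d-a) ((p:ℤ)+k) * (C (↑(a-k)) (i:ℤ) * C (↑(n-a)) ((d:ℤ)-i)))
                  = (C ((a:ℤ)-c) ((k:ℤ)-c) * C (↑(a-k)) (i:ℤ)) * C ((c:ℤ)+d-a) ((p:ℤ)+k) * C (↑(n-a)) ((d:ℤ)-i) := by ring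
                _ = (C ((a:ℤ)-c) (i:ℤ) * C (↑(a-c-i)) ((k:ℤ)-c)) * C (↑(c+d-a)) (((d:ℤ)-a-p) - ((k:ℤ)-c)) * C (↑(n-a)) ((d:ℤ)-i) := by rw [e1, e2]
                _ = (C ((a:ℤ)-c) (i:ℤ) * C (↑(n-a)) ((d:ℤ)-i)) *
                    (C (↑(a-c-i)) ((k:ℤ)-c) * C (↑(c+d-a)) (((d:ℤ)-a-p) - ((k:ℤ)-c))) := by ring
            rw [Finset.sum_congr rfl inner, ← Finset.mul_sum,
              vdm' (a-c-i) (c+d-a) (a+1) c ((d:ℤ)-a-p) (by omega)]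
            rw [show ((↑(a-c-i) : ℤ) + (↑(c+d-a) : ℤ)) = (d:ℤ)-i by omega]
            ring
          · have hz : C ((a:ℤ)-c) (i:ℤ) = 0 := C_of_lt (by omega)
            rw [hz, zero_mul]
            apply Finset.sum_eq_zero
            intro k hk
            by_contra hne
            have h1 : C ((a:ℤ)-c) ((k:ℤ)-c) ≠ 0 := fun h => hne (by rw [h]; ring)
            have h3 : C (↑(a-k)) (i:ℤ) ≠ 0 := fun h => hne (by rw [h]; ring)
            have := C_ne h1
            have := C_ne h3
            simp only [Finset.mem_range] at hk
            omega
        rw [Finset.sum_congr rfl step3]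
        have step4 : ∀ i ∈ Finset.range (a+1),
            C ((a:ℤ)-c) (i:ℤ) * (C (↑(n-a)) ((d:ℤ)-i) * C ((d:ℤ)-i) ((d:ℤ)-a-p))
            = C (↑(n-a)) ((d:ℤ)-a-p) * (C ((a:ℤ)-c) (i:ℤ) * C ((n:ℤ)+p-d) (((a:ℤ)+p)-i)) := by
          intro i _
          have h := C_tri (n-a) ((d:ℤ)-i) ((d:ℤ)-a-p)
          rw [show ((↑(n-a)):ℤ) - ((d:ℤ)-a-p) = (n:ℤ)+p-d by omega] at h
          rw [show ((d:ℤ)-i) - ((d:ℤ)-(a:ℤ)-(p:ℤ)) = ((a:ℤ)+p)-i by ring] at h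
          rw [h]; ring
        rw [Finset.sum_congr rfl step4, ← Finset.mul_sum]
        have hs : ∑ i ∈ Finset.range (a+1), C ((a:ℤ)-c) (i:ℤ) * C ((n:ℤ)+p-d) (((a:ℤ)+p)-i)
            = C ((n:ℤ)+a+p-c-d) ((a:ℤ)+p) := by
          by_cases hnp : d ≤ n + p
          · have h := vdm (a-c) (n+p-d) (a+1) ((a:ℤ)+p) (by omega)
            rw [show ((↑(a-c) : ℤ) + (↑(n+p-d) : ℤ)) = (n:ℤ)+a+p-c-d by omega] at h
            rw [show (((a-c:ℕ)):ℤ) = (a:ℤ)-c by omega] at h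
            rw [show (((n+p-d:ℕ)):ℤ) = (n:ℤ)+p-d by omega] at h
            exact h
          · have h0 : ∀ i ∈ Finset.range (a+1), C ((a:ℤ)-c) (i:ℤ) * C ((n:ℤ)+p-d) (((a:ℤ)+p)-i) = 0 := by
              intro i _
              rcases lt_or_ge (((a:ℤ)+p)-i) 0 with h | h
              · rw [C_of_neg h, mul_zero]
              · rw [C_of_lt (show (n:ℤ)+p-d < ((a:ℤ)+p)-i by omega), mul_zero]
            rw [Finset.sum_eq_zero h0, C_of_lt (show (n:ℤ)+a+p-c-d < (a:ℤ)+p by omega)]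
        rw [hs, show ((↑(n-a)):ℤ) = (n:ℤ)-a by omega]
        ring
      · -- n < a
        have hr : C ((n:ℤ)-a) ((d:ℤ)-a-p) = 0 := by
          rcases lt_or_ge ((d:ℤ)-a-p) 0 with h | h
          · exact C_of_neg h
          · exact C_of_lt (by omega)
        rw [hr, mul_zero, zero_mul]
        apply Finset.sum_eq_zero
        intro k hk
        by_contra hne
        have h1 : C (a:ℤ) (k:ℤ) ≠ 0 := fun h => hne (by rw [h]; ring)
        have h2 : C ((c:ℤ)+d-a) ((p:ℤ)+k) ≠ 0 := fun h => hne (by rw [h]; ring)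
        have h3 : C (k:ℤ) (c:ℤ) ≠ 0 := fun h => hne (by rw [h]; ring)
        have h4 : C ((n:ℤ)-k) (d:ℤ) ≠ 0 := fun h => hne (by rw [h]; ring)
        have := C_ne h1; have := C_ne h2; have := C_ne h3; have := C_ne h4
        omega
    · -- c + d < a
      have hr : C ((n:ℤ)-a) ((d:ℤ)-a-p) = 0 := C_of_neg (by omega)
      rw [hr, mul_zero, zero_mul]
      apply Finset.sum_eq_zero
      intro k _
      rw [C_of_lt (show (c:ℤ)+d-a < (p:ℤ)+k by omega)]
      ring
  · -- a < c
    have hr : C (a:ℤ) (c:ℤ) = 0 := C_of_lt (by omega)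
    rw [hr, mul_zero]
    apply Finset.sum_eq_zero
    intro k hk
    by_contra hne
    have h1 : C (a:ℤ) (k:ℤ) ≠ 0 := fun h => hne (by rw [h]; ring)
    have h3 : C (k:ℤ) (c:ℤ) ≠ 0 := fun h => hne (by rw [h]; ring)
    have := C_ne h1; have := C_ne h3
    omega
end

section
/- For all natural numbers a, b, c, m, p, we have ∑_{k=0}^{a+p} C(a, k−p)·C(b, m+k)·C(k,c)·C(m+k, m) = C(a+b−c−m, a+p−c)·C(b−m, c)·C(b, m). -/
lemma C_ofNat (n : ℕ) (y : ℤ) :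
    C (n : ℤ) y = if 0 ≤ y then ((n.choose y.toNat : ℕ) : ℤ) else 0 := by
  unfold C
  by_cases h0 : 0 ≤ y
  · by_cases h1 : y ≤ (n : ℤ)
    · rw [if_pos ⟨h0, h1⟩, if_pos h0, Int.toNat_natCast]
    · rw [if_neg (by tauto), if_pos h0, Nat.choose_eq_zero_of_lt (by omega)]
      simp
  · rw [if_neg (by tauto), if_neg h0]

lemma C_cast (n k : ℕ) : C (n : ℤ) (k : ℤ) = (n.choose k : ℤ) := by
  rw [C_ofNat, if_pos (by positivity), Int.toNat_natCast]

lemma C_neg (x y : ℤ) (h : y < 0) : C x y = 0 := by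
  unfold C
  rw [if_neg (by omega)]

lemma N1 (b m k : ℕ) :
    b.choose (m + k) * (m + k).choose m = b.choose m * (b - m).choose k := by
  by_cases h : m + k ≤ b
  · have := Nat.choose_mul (n := b) (k := m + k) (s := m) (Nat.le_add_right m k)
    rw [this, Nat.add_sub_cancel_left]
  · have h1 : b.choose (m + k) = 0 := Nat.choose_eq_zero_of_lt (by omega)
    by_cases hb : m ≤ b
    · have h2 : (b - m).choose k = 0 := Nat.choose_eq_zero_of_lt (by omega)
      rw [h1, h2, Nat.mul_zero, Nat.zero_mul]
    · have h2 : b.choose m = 0 := Nat.choose_eq_zero_of_lt (by omega)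
      rw [h1, h2, Nat.zero_mul, Nat.zero_mul]

lemma N2 (B c k : ℕ) (hck : c ≤ k) :
    B.choose k * k.choose c = B.choose c * (B - c).choose (k - c) := by
  by_cases h : k ≤ B
  · exact Nat.choose_mul hck
  · have h1 : B.choose k = 0 := Nat.choose_eq_zero_of_lt (by omega)
    by_cases hc : c ≤ B
    · have h2 : (B - c).choose (k - c) = 0 := Nat.choose_eq_zero_of_lt (by omega)
      rw [h1, h2, Nat.mul_zero, Nat.zero_mul]
    · have h2 : B.choose c = 0 := Nat.choose_eq_zero_of_lt (by omega)
      rw [h1, h2, Nat.zero_mul, Nat.zero_mul]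

lemma N3 (a D p c : ℕ) (hc : c ≤ a + p) :
    ∑ k ∈ Finset.range (a + p + 1),
      (if p ≤ k then a.choose (k - p) else 0) * (if c ≤ k then D.choose (k - c) else 0)
      = (a + D).choose (a + p - c) := by
  set n := a + p - c with hn
  have step1 : ∀ k ∈ Finset.range (a + p + 1),
      (if p ≤ k then a.choose (k - p) else 0) * (if c ≤ k then D.choose (k - c) else 0)
      = a.choose (a + p - k) * (if c ≤ k then D.choose (k - c) else 0) := by
    intro k hk
    rw [Finset.mem_range] at hk
    by_cases hp : p ≤ k
    · rw [if_pos hp]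
      congr 1
      rw [← Nat.choose_symm (show k - p ≤ a by omega)]
      congr 1
      omega
    · have h1 : a.choose (a + p - k) = 0 := Nat.choose_eq_zero_of_lt (by omega)
      rw [if_neg hp, h1, Nat.zero_mul]
  rw [Finset.sum_congr rfl step1]
  have step2 : ∑ k ∈ Finset.range (a + p + 1),
      a.choose (a + p - k) * (if c ≤ k then D.choose (k - c) else 0)
      = ∑ k ∈ Finset.Ico c (a + p + 1), a.choose (a + p - k) * D.choose (k - c) := by
    rw [← Finset.sum_subset (show Finset.Ico c (a+p+1) ⊆ Finset.range (a+p+1) by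
        intro x hx; rw [Finset.mem_Ico] at hx; exact Finset.mem_range.mpr hx.2)]
    · apply Finset.sum_congr rfl
      intro k hk
      rw [Finset.mem_Ico] at hk
      rw [if_pos hk.1]
    · intro k hk hk'
      rw [Finset.mem_range] at hk
      rw [Finset.mem_Ico] at hk'
      rw [if_neg (by omega), Nat.mul_zero]
  rw [step2, Finset.sum_Ico_eq_sum_range]
  have hrange : a + p + 1 - c = n + 1 := by omega
  rw [hrange]
  have step3 : ∀ j ∈ Finset.range (n + 1),
      a.choose (a + p - (c + j)) * D.choose (c + j - c)
      = a.choose (n - j) * D.choose j := by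
    intro j hj
    rw [Finset.mem_range] at hj
    congr 2 <;> omega
  rw [Finset.sum_congr rfl step3]
  rw [Nat.add_choose_eq, Finset.Nat.sum_antidiagonal_eq_sum_range_succ_mk]
  rw [← Finset.sum_range_reflect]
  apply Finset.sum_congr rfl
  intro j hj
  rw [Finset.mem_range] at hj
  congr 2 <;> omega

lemma pt (b m c k : ℕ) :
    b.choose (m + k) * k.choose c * (m + k).choose m
      = (if c ≤ k then (b - m - c).choose (k - c) else 0) * ((b - m).choose c * b.choose m) := by
  by_cases hck : c ≤ k
  · rw [if_pos hck]
    calc b.choose (m+k) * k.choose c * (m+k).choose m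
        = (b.choose (m+k) * (m+k).choose m) * k.choose c := by ring
      _ = (b.choose m * (b-m).choose k) * k.choose c := by rw [N1]
      _ = ((b-m).choose k * k.choose c) * b.choose m := by ring
      _ = ((b-m).choose c * (b-m-c).choose (k-c)) * b.choose m := by rw [N2 _ _ _ hck]
      _ = _ := by ring
  · rw [if_neg hck, Nat.choose_eq_zero_of_lt (show k < c by omega)]
    simp

theorem stmt_9 (a b c m p : ℕ) :
    ∑ k ∈ Finset.range (a + p + 1), C a ((k : ℤ) - p) * C b ((m : ℤ) + k) * C k c * C ((m : ℤ) + k) m = C ((a : ℤ) + b - c - m) ((a : ℤ) + p - c) * C ((b : ℤ) - m) c * C b m := by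
  by_cases hmb : m ≤ b
  · by_cases hcb : m + c ≤ b
    · by_cases hca : c ≤ a + p
      · -- main case
        have hbm : (b : ℤ) - m = ((b - m : ℕ) : ℤ) := by omega
        have habcm : (a : ℤ) + b - c - m = ((a + (b - m - c) : ℕ) : ℤ) := by omega
        have hapc : (a : ℤ) + p - c = ((a + p - c : ℕ) : ℤ) := by omega
        rw [habcm, hapc, hbm, C_cast, C_cast, C_cast]
        have hterm : ∀ k ∈ Finset.range (a + p + 1),
            C a ((k : ℤ) - p) * C b ((m : ℤ) + k) * C k c * C ((m : ℤ) + k) m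
            = (((if p ≤ k then a.choose (k - p) else 0)
                * (if c ≤ k then (b - m - c).choose (k - c) else 0)
                * ((b - m).choose c * b.choose m) : ℕ) : ℤ) := by
          intro k _
          have h1 : C a ((k : ℤ) - p) = ((if p ≤ k then a.choose (k - p) else 0 : ℕ) : ℤ) := by
            rw [C_ofNat]
            by_cases hpk : p ≤ k
            · rw [if_pos (by omega), if_pos hpk]
              congr 2
              omega
            · rw [if_neg (by omega), if_neg hpk]
              simp
          have h2 : (m : ℤ) + k = ((m + k : ℕ) : ℤ) := by push_cast; ring
          rw [h1, h2, C_cast, C_cast, C_cast]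
          push_cast
          rw [show ((if p ≤ k then (a.choose (k - p) : ℤ) else 0)
              * (b.choose (m + k) : ℤ) * (k.choose c : ℤ) * ((m + k).choose m : ℤ))
            = (if p ≤ k then (a.choose (k - p) : ℤ) else 0)
              * ((b.choose (m + k) : ℤ) * (k.choose c : ℤ) * ((m + k).choose m : ℤ)) from by ring]
          have := pt b m c k
          have hz : ((b.choose (m + k) * k.choose c * (m + k).choose m : ℕ) : ℤ)
              = (((if c ≤ k then (b - m - c).choose (k - c) else 0)
                * ((b - m).choose c * b.choose m) : ℕ) : ℤ) := by exact_mod_cast congrArg (Nat.cast : ℕ → ℤ) this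
          push_cast at hz
          rw [hz]
          ring
        rw [Finset.sum_congr rfl hterm]
        rw [← Nat.cast_sum, ← Finset.sum_mul, N3 a (b - m - c) p c hca]
        push_cast
        ring
      · -- c > a + p : both sides 0
        rw [Finset.sum_eq_zero, C_neg _ _ (by omega)]
        · ring
        · intro k hk
          rw [Finset.mem_range] at hk
          have : C (k : ℤ) c = 0 := by
            rw [C_cast, Nat.choose_eq_zero_of_lt (by omega)]
            simp
          rw [this]
          ring
    · -- b < m + c : both sides 0
      have hbm : (b : ℤ) - m = ((b - m : ℕ) : ℤ) := by omega
      have hR : C ((b : ℤ) - m) c = 0 := by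
        rw [hbm, C_cast, Nat.choose_eq_zero_of_lt (by omega)]
        simp
      rw [Finset.sum_eq_zero, hR]
      · ring
      · intro k hk
        by_cases hck : c ≤ k
        · have h2 : (m : ℤ) + k = ((m + k : ℕ) : ℤ) := by push_cast; ring
          have hz : C (b : ℤ) ((m : ℤ) + k) = 0 := by
            rw [h2, C_cast, Nat.choose_eq_zero_of_lt (by omega)]
            simp
          rw [hz]
          ring
        · have : C (k : ℤ) c = 0 := by
            rw [C_cast, Nat.choose_eq_zero_of_lt (by omega)]
            simp
          rw [this]
          ring
  · -- b < m : both sides 0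
    have hR : C (b : ℤ) m = 0 := by
      rw [C_cast, Nat.choose_eq_zero_of_lt (by omega)]
      simp
    rw [Finset.sum_eq_zero, hR]
    · ring
    · intro k hk
      have h2 : (m : ℤ) + k = ((m + k : ℕ) : ℤ) := by push_cast; ring
      have : C (b : ℤ) ((m : ℤ) + k) = 0 := by
        rw [h2, C_cast, Nat.choose_eq_zero_of_lt (by omega)]
        simp
      rw [this]
      ring
end
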